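/- Let (A,B,C,D) be a discrete-time LTI system with A ∈ ℝ^{n×n}, B ∈ ℝ^{n×m}, C ∈ ℝ^{p×n}, D ∈ ℝ^{p×m}, and let (u^d, y^d) be a length-T trajectory of this system. Fix L ≤ T. Then for every vector g ∈ ℝ^{T−L+1}, the pair (H_L(u^d) g, H_L(y^d) g) ∈ ℝ^{mL} × ℝ^{pL} (viewed as length-L input and output sequences) is a length-L trajectory of the system (A,B,C,D). -/
import Mathlib


/-- The depth-`L` Hankel matrix of a signal `u : {1,…,T} → ℝ^m` (indexed here by `Fin T`).
Its `j`-th column is the stacked vector `col(u j, u (j+1), …, u (j+L-1)) ∈ ℝ^{mL}`. -/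
def hankel (m T L : ℕ) (u : Fin T → Fin m → ℝ) :
    Matrix (Fin L × Fin m) (Fin (T + 1 - L)) ℝ :=
  fun ir j => if h : (j : ℕ) + (ir.1 : ℕ) < T then u ⟨(j : ℕ) + (ir.1 : ℕ), h⟩ ir.2 else 0

/-- `(u, y)` is a length-`L` trajectory of the discrete-time LTI system `(A, B, C, D)`:
there is a state sequence `x` with `x(k+1) = A x(k) + B u(k)` and `y(k) = C x(k) + D u(k)`. -/
def IsTrajectory (n m p L : ℕ)
    (A : Matrix (Fin n) (Fin n) ℝ) (B : Matrix (Fin n) (Fin m) ℝ)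
    (C : Matrix (Fin p) (Fin n) ℝ) (D : Matrix (Fin p) (Fin m) ℝ)
    (u : Fin L → Fin m → ℝ) (y : Fin L → Fin p → ℝ) : Prop :=
  ∃ x : Fin L → Fin n → ℝ,
    (∀ k : ℕ, (h : k + 1 < L) →
      x ⟨k + 1, h⟩ = A.mulVec (x ⟨k, by omega⟩) + B.mulVec (u ⟨k, by omega⟩)) ∧
    (∀ k : Fin L, y k = C.mulVec (x k) + D.mulVec (u k))

/-- If `(u^d, y^d)` is a length-`T` trajectory of the LTI system `(A,B,C,D)` and `L ≤ T`,
then for every `g ∈ ℝ^{T−L+1}` the pair `(H_L(u^d) g, H_L(y^d) g)`, viewed as length-`L`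
input and output sequences, is again a length-`L` trajectory of the system. -/
theorem hankel_mulVec_isTrajectory
    (n m p T L : ℕ) (hLT : L ≤ T)
    (A : Matrix (Fin n) (Fin n) ℝ) (B : Matrix (Fin n) (Fin m) ℝ)
    (C : Matrix (Fin p) (Fin n) ℝ) (D : Matrix (Fin p) (Fin m) ℝ)
    (ud : Fin T → Fin m → ℝ) (yd : Fin T → Fin p → ℝ)
    (htraj : IsTrajectory n m p T A B C D ud yd)
    (g : Fin (T + 1 - L) → ℝ) :
    IsTrajectory n m p L A B C D
      (fun k r => (hankel m T L ud).mulVec g (k, r))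
      (fun k r => (hankel p T L yd).mulVec g (k, r)) := by
  obtain ⟨x, hx, hy⟩ := htraj
  have hidx : ∀ (j : Fin (T + 1 - L)) (k : ℕ), k < L → (j : ℕ) + k < T := by
    intro j k hk
    have := j.isLt
    omega
  refine ⟨fun k r => ∑ j, g j * x ⟨(j : ℕ) + (k : ℕ), hidx j k k.isLt⟩ r, ?_, ?_⟩
  · intro k h
    funext r
    have step : ∀ j : Fin (T + 1 - L),
        x ⟨(j : ℕ) + (k + 1), hidx j (k + 1) h⟩ r =
          (∑ s, A r s * x ⟨(j : ℕ) + k, hidx j k (by omega)⟩ s) +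
          (∑ s, B r s * ud ⟨(j : ℕ) + k, hidx j k (by omega)⟩ s) := by
      intro j
      have hj : (j : ℕ) + k + 1 < T := by have := hidx j (k + 1) h; omega
      have := hx ((j : ℕ) + k) hj
      have heq : (⟨(j : ℕ) + (k + 1), hidx j (k + 1) h⟩ : Fin T) = ⟨(j : ℕ) + k + 1, hj⟩ :=
        Fin.mk_eq_mk.mpr (by omega)
      rw [heq, this]
      simp [Matrix.mulVec, dotProduct]
    simp only [step]
    simp only [Matrix.mulVec, dotProduct, hankel, Pi.add_apply]
    have hd : ∀ j : Fin (T + 1 - L), (j : ℕ) + (k : ℕ) < T := fun j => hidx j k (by omega)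
    simp only [mul_add, Finset.mul_sum, Finset.sum_add_distrib]
    congr 1
    · rw [Finset.sum_comm]
      apply Finset.sum_congr rfl; intro s _
      apply Finset.sum_congr rfl; intro j _
      ring
    · rw [Finset.sum_comm]
      apply Finset.sum_congr rfl; intro s _
      apply Finset.sum_congr rfl; intro j _
      rw [dif_pos (hd j)]
      ring
  · intro k
    funext r
    simp only [Matrix.mulVec, dotProduct, hankel, Pi.add_apply]
    have hd : ∀ j : Fin (T + 1 - L), (j : ℕ) + (k : ℕ) < T := fun j => hidx j k k.isLt
    have hyk : ∀ j : Fin (T + 1 - L),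
        yd ⟨(j : ℕ) + (k : ℕ), hd j⟩ r =
          (∑ s, C r s * x ⟨(j : ℕ) + (k : ℕ), hd j⟩ s) +
          (∑ s, D r s * ud ⟨(j : ℕ) + (k : ℕ), hd j⟩ s) := by
      intro j
      have := hy ⟨(j : ℕ) + (k : ℕ), hd j⟩
      rw [this]
      simp [Matrix.mulVec, dotProduct]
    calc (∑ j : Fin (T + 1 - L), (if h : (j : ℕ) + (k : ℕ) < T then yd ⟨(j : ℕ) + (k : ℕ), h⟩ r else 0) * g j)
        = ∑ j : Fin (T + 1 - L), ((∑ s, C r s * x ⟨(j : ℕ) + (k : ℕ), hd j⟩ s) +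
            (∑ s, D r s * ud ⟨(j : ℕ) + (k : ℕ), hd j⟩ s)) * g j := by
          apply Finset.sum_congr rfl; intro j _
          rw [dif_pos (hd j), hyk j]
      _ = _ := by
          simp only [add_mul, Finset.sum_mul, Finset.sum_add_distrib, Finset.mul_sum]
          congr 1
          · rw [Finset.sum_comm]
            apply Finset.sum_congr rfl; intro s _
            apply Finset.sum_congr rfl; intro j _
            ring
          · rw [Finset.sum_comm]
            apply Finset.sum_congr rfl; intro s _
            apply Finset.sum_congr rfl; intro j _
            rw [dif_pos (hd j)]
            ring
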